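/- Let ε > 0, let N, L, K ∈ ℕ+, let δ ∈ (0, 1/(3K)], let f ∈ C([0,1]^d), and let φ̃ : ℝ^d → ℝ be implemented by a ReLU FNN with width at most N and depth at most L. If |φ̃(x) − f(x)| ≤ ε for every x ∈ [0,1]^d \ Ω([0,1]^d, K, δ), then there exists a function φ : ℝ^d → ℝ implemented by a ReLU FNN with width at most 3^d·(N+4) and depth at most L + 2d such that |φ(x) − f(x)| ≤ ε + d·ω_f(δ) for every x ∈ [0,1]^d. -/

import Mathlib

open Real

noncomputable section

/-- `A` is an affine map from `ℝ^m` to `ℝ^n`. -/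
def IsAffineMap (m n : ℕ) (A : (Fin m → ℝ) → (Fin n → ℝ)) : Prop :=
  ∃ (M : Matrix (Fin n) (Fin m) ℝ) (b : Fin n → ℝ), ∀ x, A x = M.mulVec x + b

/-- `φ : ℝ^d → ℝ` is realized by a ReLU network with exactly `L'` hidden layers,
each of positive width at most `W`. -/
def ReLUNetRec (W : ℝ) : ℕ → ∀ d : ℕ, ((Fin d → ℝ) → ℝ) → Prop
  | 0, d, φ => ∃ A : (Fin d → ℝ) → (Fin 1 → ℝ), IsAffineMap d 1 A ∧ ∀ x, φ x = A x 0
  | L' + 1, d, φ => ∃ n : ℕ, 0 < n ∧ (n : ℝ) ≤ W ∧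
      ∃ A : (Fin d → ℝ) → (Fin n → ℝ), IsAffineMap d n A ∧
        ∃ ψ : (Fin n → ℝ) → ℝ, ReLUNetRec W L' n ψ ∧
          ∀ x, φ x = ψ (fun i => max (A x i) 0)

/-- `φ : ℝ^d → ℝ` is implemented by a ReLU FNN with width at most `W` and depth at most `D`. -/
def ImplementedBy (d : ℕ) (W D : ℝ) (φ : (Fin d → ℝ) → ℝ) : Prop :=
  ∃ L' : ℕ, (L' : ℝ) ≤ D ∧ ReLUNetRec W L' d φ

/-- one-dimensional-input version of `ImplementedBy`. -/
def ImplementedBy1 (W D : ℝ) (φ : ℝ → ℝ) : Prop :=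
  ImplementedBy 1 W D (fun x => φ (x 0))

/-- two-dimensional-input version of `ImplementedBy`. -/
def ImplementedBy2 (W D : ℝ) (φ : ℝ → ℝ → ℝ) : Prop :=
  ImplementedBy 2 W D (fun x => φ (x 0) (x 1))

/-- the unit cube `[0,1]^d`. -/
def unitCube (d : ℕ) : Set (Fin d → ℝ) := Set.Icc 0 1

/-- the trifling region `Ω([0,1]^d, K, δ)`. -/
def trifling (d K : ℕ) (δ : ℝ) : Set (Fin d → ℝ) :=
  {x | x ∈ unitCube d ∧ ∃ i : Fin d, ∃ k : ℕ, 1 ≤ k ∧ k ≤ K - 1 ∧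
        x i ∈ Set.Ioo ((k : ℝ) / K - δ) ((k : ℝ) / K)}

/-- the modulus of continuity of `f` on `[0,1]^d` (w.r.t. the Euclidean norm). -/
def modCont (d : ℕ) (f : (Fin d → ℝ) → ℝ) (r : ℝ) : ℝ :=
  sSup {t | ∃ x ∈ unitCube d, ∃ y ∈ unitCube d,
        Real.sqrt (∑ i, (x i - y i) ^ 2) ≤ r ∧ t = |f x - f y|}

/-! ### Auxiliary lemmas on affine maps -/

lemma isAffine_comp {d m n : ℕ} {A : (Fin m → ℝ) → (Fin n → ℝ)} {B : (Fin d → ℝ) → (Fin m → ℝ)}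
    (hA : IsAffineMap m n A) (hB : IsAffineMap d m B) :
    IsAffineMap d n (fun x => A (B x)) := by
  obtain ⟨M, b, hM⟩ := hA
  obtain ⟨M', b', hM'⟩ := hB
  refine ⟨M * M', M.mulVec b' + b, fun x => ?_⟩
  show A (B x) = _
  rw [hM, hM', Matrix.mulVec_add, Matrix.mulVec_mulVec, add_assoc]

lemma isAffine_append {d a b : ℕ} {A : (Fin d → ℝ) → (Fin a → ℝ)} {B : (Fin d → ℝ) → (Fin b → ℝ)}
    (hA : IsAffineMap d a A) (hB : IsAffineMap d b B) :
    IsAffineMap d (a + b) (fun x => Fin.append (A x) (B x)) := by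
  obtain ⟨M, c, hM⟩ := hA
  obtain ⟨M', c', hM'⟩ := hB
  refine ⟨Matrix.of (Fin.append M M'), Fin.append c c', fun x => ?_⟩
  funext i
  refine Fin.addCases (fun j => ?_) (fun j => ?_) i <;>
    simp [Fin.append_left, Fin.append_right, Matrix.mulVec, hM, hM', Pi.add_apply, Fin.append_left M M', Fin.append_right M M']

lemma isAffine_reindex {m n : ℕ} (r : Fin n → Fin m) :
    IsAffineMap m n (fun z i => z (r i)) := by
  refine ⟨Matrix.of (fun i j => if j = r i then 1 else 0), 0, fun z => ?_⟩
  funext i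
  simp [Matrix.mulVec, dotProduct, ite_mul]

lemma isAffine_id (d : ℕ) : IsAffineMap d d (fun x => x) := by
  refine ⟨1, 0, fun x => ?_⟩
  simp [Matrix.one_mulVec]

lemma isAffine_shift (d : ℕ) (e : Fin d) (t : ℝ) :
    IsAffineMap d d (fun x j => x j + if j = e then t else 0) := by
  refine ⟨1, fun j => if j = e then t else 0, fun x => ?_⟩
  funext j
  simp [Matrix.one_mulVec]

/-! ### Basic operations on ReLU networks -/

lemma relu_congr {W : ℝ} {L' d : ℕ} {φ φ' : (Fin d → ℝ) → ℝ}
    (h : ∀ x, φ x = φ' x) (hφ : ReLUNetRec W L' d φ) : ReLUNetRec W L' d φ' := by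
  have : φ = φ' := funext h
  rwa [← this]

lemma relu_mono {W W' : ℝ} (hW : W ≤ W') : ∀ {L' d : ℕ} {φ : (Fin d → ℝ) → ℝ},
    ReLUNetRec W L' d φ → ReLUNetRec W' L' d φ := by
  intro L'
  induction L' with
  | zero => intro d φ h; exact h
  | succ L ih =>
    rintro d φ ⟨n, hn, hnW, A, hA, ψ, hψ, hval⟩
    exact ⟨n, hn, le_trans hnW hW, A, hA, ψ, ih hψ, hval⟩

lemma relu_pre {W : ℝ} : ∀ {L' d m : ℕ} {ψ : (Fin m → ℝ) → ℝ} {B : (Fin d → ℝ) → (Fin m → ℝ)},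
    ReLUNetRec W L' m ψ → IsAffineMap d m B → ReLUNetRec W L' d (fun x => ψ (B x)) := by
  intro L'
  induction L' with
  | zero =>
    rintro d m ψ B ⟨A, hA, hval⟩ hB
    exact ⟨fun x => A (B x), isAffine_comp hA hB, fun x => by simp [hval]⟩
  | succ L ih =>
    rintro d m ψ B ⟨n, hn, hnW, A, hA, χ, hχ, hval⟩ hB
    exact ⟨n, hn, hnW, fun x => A (B x), isAffine_comp hA hB, χ, hχ, fun x => by simp [hval]⟩

/-! ### The `mid` function and its properties -/

def midf (a b c : ℝ) : ℝ := a + b + c - max a (max b c) - min a (min b c)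

lemma relu_sub (t : ℝ) : max t 0 - max (-t) 0 = t := by
  rcases le_total t 0 with h | h
  · rw [max_eq_right h, max_eq_left (by linarith)]; ring
  · rw [max_eq_left h, max_eq_right (by linarith)]; ring

lemma relu_add (t : ℝ) : max t 0 + max (-t) 0 = |t| := by
  rcases le_total t 0 with h | h
  · rw [max_eq_right h, max_eq_left (by linarith), abs_of_nonpos h]; ring
  · rw [max_eq_left h, max_eq_right (by linarith), abs_of_nonneg h]; ring

set_option maxHeartbeats 2000000 in
lemma midf_formula (a b c : ℝ) :
    midf a b c = (a + b) / 2 - |(|a - b| + (a + b - 2 * c)) / 2| / 2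
      + |((a + b - 2 * c) - |a - b|) / 2| / 2 := by
  simp only [midf, abs_eq_max_neg, max_def, min_def]
  split_ifs <;> linarith

lemma midf_comm12 (a b c : ℝ) : midf a b c = midf b a c := by
  simp only [midf, max_def, min_def]; split_ifs <;> linarith

lemma midf_comm23 (a b c : ℝ) : midf a b c = midf a c b := by
  simp only [midf, max_def, min_def]; split_ifs <;> linarith

lemma midf_pair (a b c : ℝ) : min a b ≤ midf a b c ∧ midf a b c ≤ max a b := by
  simp only [midf, max_def, min_def]
  split_ifs <;> constructor <;> linarith

lemma midf_bound_ab {a b c t E : ℝ} (ha : |a - t| ≤ E) (hb : |b - t| ≤ E) :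
    |midf a b c - t| ≤ E := by
  obtain ⟨h1, h2⟩ := midf_pair a b c
  rw [abs_le] at *
  rcases le_total a b with h | h
  · rw [min_eq_left h] at h1; rw [max_eq_right h] at h2
    constructor <;> linarith
  · rw [min_eq_right h] at h1; rw [max_eq_left h] at h2
    constructor <;> linarith

lemma midf_bound_bc {a b c t E : ℝ} (hb : |b - t| ≤ E) (hc : |c - t| ≤ E) :
    |midf a b c - t| ≤ E := by
  rw [midf_comm12, midf_comm23]; exact midf_bound_ab hb hc

lemma midf_bound_ac {a b c t E : ℝ} (ha : |a - t| ≤ E) (hc : |c - t| ≤ E) :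
    |midf a b c - t| ≤ E := by
  rw [midf_comm23]; exact midf_bound_ab ha hc

/-! ### A ReLU network computing `midf` -/

@[simp]
lemma cons_val_five' {α : Type*} {m : ℕ} (x : α) (u : Fin (m+5) → α) :
    Matrix.vecCons x u 5 =
      Matrix.vecHead (Matrix.vecTail (Matrix.vecTail (Matrix.vecTail (Matrix.vecTail u)))) :=
  rfl

def mA0 : (Fin 3 → ℝ) → (Fin 6 → ℝ) := fun z =>
  ![z 0 - z 1, z 1 - z 0, z 0 + z 1 - 2 * z 2, 2 * z 2 - z 0 - z 1, z 0 + z 1, -z 0 - z 1]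

def mA1 : (Fin 6 → ℝ) → (Fin 6 → ℝ) := fun h =>
  ![(h 0 + h 1 + h 2 - h 3) / 2, -((h 0 + h 1 + h 2 - h 3) / 2),
    (h 2 - h 3 - h 0 - h 1) / 2, -((h 2 - h 3 - h 0 - h 1) / 2),
    h 4 - h 5, h 5 - h 4]

def mA2 : (Fin 6 → ℝ) → (Fin 1 → ℝ) := fun g =>
  ![(g 4 - g 5) / 2 - (g 0 + g 1) / 2 + (g 2 + g 3) / 2]

lemma mA0_affine : IsAffineMap 3 6 mA0 := by
  refine ⟨Matrix.of ![![1,-1,0], ![-1,1,0], ![1,1,-2], ![-1,-1,2], ![1,1,0], ![-1,-1,0]], 0,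
    fun z => ?_⟩
  funext i
  fin_cases i <;>
    simp [mA0, Matrix.cons_val_succ, Matrix.mulVec, dotProduct, Fin.sum_univ_three] <;> ring

lemma mA1_affine : IsAffineMap 6 6 mA1 := by
  refine ⟨Matrix.of ![![1/2,1/2,1/2,-1/2,0,0], ![-1/2,-1/2,-1/2,1/2,0,0],
    ![-1/2,-1/2,1/2,-1/2,0,0], ![1/2,1/2,-1/2,1/2,0,0], ![0,0,0,0,1,-1], ![0,0,0,0,-1,1]], 0,
    fun h => ?_⟩
  funext i
  fin_cases i <;>
    simp [mA1, Matrix.mulVec, dotProduct, Fin.sum_univ_six, Matrix.cons_val_succ] <;> ring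

lemma mA2_affine : IsAffineMap 6 1 mA2 := by
  refine ⟨Matrix.of ![![-1/2,-1/2,1/2,1/2,1/2,-1/2]], 0, fun g => ?_⟩
  funext i
  fin_cases i <;>
    simp [mA2, Matrix.mulVec, dotProduct, Fin.sum_univ_six, Matrix.cons_val_succ] <;> ring

lemma mid_net : ReLUNetRec 6 2 3 (fun z => midf (z 0) (z 1) (z 2)) := by
  refine ⟨6, by norm_num, by norm_num, mA0, mA0_affine, _,
    ⟨6, by norm_num, by norm_num, mA1, mA1_affine,
      (fun g => mA2 g 0), ⟨mA2, mA2_affine, fun _ => rfl⟩, fun h => rfl⟩, fun z => ?_⟩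
  show midf (z 0) (z 1) (z 2) = mA2 (fun i => max (mA1 (fun i => max (mA0 z i) 0) i) 0) 0
  have ra : max (z 0 - z 1) 0 + max (z 1 - z 0) 0 = |z 0 - z 1| := by
    rw [show z 1 - z 0 = -(z 0 - z 1) by ring]; exact relu_add _
  have rs : max (z 0 + z 1 - 2 * z 2) 0 - max (2 * z 2 - z 0 - z 1) 0 = z 0 + z 1 - 2 * z 2 := by
    rw [show 2 * z 2 - z 0 - z 1 = -(z 0 + z 1 - 2 * z 2) by ring]; exact relu_sub _
  have rz : max (z 0 + z 1) 0 - max (-z 0 - z 1) 0 = z 0 + z 1 := by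
    rw [show -z 0 - z 1 = -(z 0 + z 1) by ring]; exact relu_sub _
  have h1 : (fun i => max (mA1 (fun j => max (mA0 z j) 0) i) 0)
      = ![max ((|z 0 - z 1| + (z 0 + z 1 - 2 * z 2)) / 2) 0,
          max (-((|z 0 - z 1| + (z 0 + z 1 - 2 * z 2)) / 2)) 0,
          max (((z 0 + z 1 - 2 * z 2) - |z 0 - z 1|) / 2) 0,
          max (-(((z 0 + z 1 - 2 * z 2) - |z 0 - z 1|) / 2)) 0,
          max (z 0 + z 1) 0, max (-(z 0 + z 1)) 0] := by
    funext i
    fin_cases i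
    · simp [mA1, mA0]; try (congr 1; linear_combination (ra + rs) / 2)
    · simp [mA1, mA0]; try (congr 1; linear_combination -((ra + rs) / 2))
    · simp [mA1, mA0]; try (congr 1; linear_combination (rs - ra) / 2)
    · simp [mA1, mA0]; try (congr 1; linear_combination -((rs - ra) / 2))
    · simp [mA1, mA0]; try rw [rz]
    · simp [mA1, mA0]; try (congr 1; linarith [rz])
  rw [h1]
  simp only [mA2, Matrix.cons_val_zero, Matrix.cons_val_one, Matrix.head_cons,
    Matrix.cons_val_two, Matrix.cons_val_three, Matrix.cons_val_four, cons_val_five',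
    Matrix.tail_cons]
  rw [midf_formula]
  linarith [relu_sub (z 0 + z 1),
    relu_add ((|z 0 - z 1| + (z 0 + z 1 - 2 * z 2)) / 2),
    relu_add (((z 0 + z 1 - 2 * z 2) - |z 0 - z 1|) / 2)]

/-! ### Parallel combination with `midf` on top -/

lemma isAffine_three {d : ℕ} {f g h : (Fin d → ℝ) → (Fin 1 → ℝ)}
    (hf : IsAffineMap d 1 f) (hg : IsAffineMap d 1 g) (hh : IsAffineMap d 1 h) :
    IsAffineMap d 3 (fun x => ![f x 0, g x 0, h x 0]) := by
  obtain ⟨Mf, bf, hMf⟩ := hf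
  obtain ⟨Mg, bg, hMg⟩ := hg
  obtain ⟨Mh, bh, hMh⟩ := hh
  refine ⟨Matrix.of ![Mf 0, Mg 0, Mh 0], ![bf 0, bg 0, bh 0], fun x => ?_⟩
  funext i
  fin_cases i <;> simp [hMf, hMg, hMh, Matrix.mulVec, Pi.add_apply]

lemma parmid {W : ℝ} : ∀ (L' : ℕ) {d m1 m2 m3 : ℕ}
    {ψ1 : (Fin m1 → ℝ) → ℝ} {ψ2 : (Fin m2 → ℝ) → ℝ} {ψ3 : (Fin m3 → ℝ) → ℝ}
    {B1 : (Fin d → ℝ) → (Fin m1 → ℝ)} {B2 : (Fin d → ℝ) → (Fin m2 → ℝ)}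
    {B3 : (Fin d → ℝ) → (Fin m3 → ℝ)},
    ReLUNetRec W L' m1 ψ1 → ReLUNetRec W L' m2 ψ2 → ReLUNetRec W L' m3 ψ3 →
    IsAffineMap d m1 B1 → IsAffineMap d m2 B2 → IsAffineMap d m3 B3 →
    ReLUNetRec (max (3 * W) 6) (L' + 2) d
      (fun x => midf (ψ1 (B1 x)) (ψ2 (B2 x)) (ψ3 (B3 x))) := by
  intro L'
  induction L' with
  | zero =>
    rintro d m1 m2 m3 ψ1 ψ2 ψ3 B1 B2 B3 ⟨A1, hA1, hv1⟩ ⟨A2, hA2, hv2⟩ ⟨A3, hA3, hv3⟩ hB1 hB2 hB3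
    have hC : IsAffineMap d 3 (fun x => ![A1 (B1 x) 0, A2 (B2 x) 0, A3 (B3 x) 0]) :=
      isAffine_three (isAffine_comp hA1 hB1) (isAffine_comp hA2 hB2) (isAffine_comp hA3 hB3)
    have hnet := relu_pre (B := fun x => ![A1 (B1 x) 0, A2 (B2 x) 0, A3 (B3 x) 0]) mid_net hC
    refine relu_mono (le_max_right _ _) (relu_congr (fun x => ?_) hnet)
    show midf _ _ _ = midf _ _ _
    rw [hv1, hv2, hv3]
    simp
  | succ L ih =>
    rintro d m1 m2 m3 ψ1 ψ2 ψ3 B1 B2 B3 ⟨n1, hn1, hn1W, A1, hA1, χ1, hχ1, hv1⟩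
      ⟨n2, hn2, hn2W, A2, hA2, χ2, hχ2, hv2⟩ ⟨n3, hn3, hn3W, A3, hA3, χ3, hχ3, hv3⟩ hB1 hB2 hB3
    set C : (Fin d → ℝ) → (Fin (n1 + n2 + n3) → ℝ) :=
      fun x => Fin.append (Fin.append (A1 (B1 x)) (A2 (B2 x))) (A3 (B3 x)) with hCdef
    have hC : IsAffineMap d (n1 + n2 + n3) C :=
      isAffine_append (isAffine_append (isAffine_comp hA1 hB1) (isAffine_comp hA2 hB2))
        (isAffine_comp hA3 hB3)
    have hP1 : IsAffineMap (n1 + n2 + n3) n1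
        (fun z (i : Fin n1) => z (Fin.castAdd n3 (Fin.castAdd n2 i))) :=
      isAffine_reindex _
    have hP2 : IsAffineMap (n1 + n2 + n3) n2
        (fun z (i : Fin n2) => z (Fin.castAdd n3 (Fin.natAdd n1 i))) :=
      isAffine_reindex _
    have hP3 : IsAffineMap (n1 + n2 + n3) n3 (fun z (i : Fin n3) => z (Fin.natAdd (n1 + n2) i)) :=
      isAffine_reindex _
    have inner := ih hχ1 hχ2 hχ3 hP1 hP2 hP3
    refine ⟨n1 + n2 + n3, by positivity, ?_, C, hC, _, inner, fun x => ?_⟩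
    · have : ((n1 + n2 + n3 : ℕ) : ℝ) ≤ 3 * W := by push_cast; linarith
      exact le_trans this (le_max_left _ _)
    · show midf (ψ1 (B1 x)) (ψ2 (B2 x)) (ψ3 (B3 x)) = midf _ _ _
      rw [hv1, hv2, hv3]
      congr 1
      · congr 1
        funext i
        simp [hCdef, Fin.append_left]
      · congr 1
        funext i
        simp [hCdef, Fin.append_left, Fin.append_right]
      · congr 1
        funext i
        simp [hCdef, Fin.append_right]

/-! ### One-dimensional geometry of the trifling region -/

def GoodPt (K : ℕ) (δ u : ℝ) : Prop :=
  0 ≤ u ∧ u ≤ 1 ∧ ¬∃ k : ℕ, 1 ≤ k ∧ k ≤ K - 1 ∧ (k : ℝ) / K - δ < u ∧ u < (k : ℝ) / K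

lemma bad_bounds {K : ℕ} (hK : 0 < K) {δ u : ℝ}
    (h : ∃ k : ℕ, 1 ≤ k ∧ k ≤ K - 1 ∧ (k : ℝ) / K - δ < u ∧ u < (k : ℝ) / K) :
    ∃ k : ℕ, 1 ≤ (k : ℝ) ∧ (k : ℝ) + 1 ≤ K ∧ (k : ℝ) - δ * K < u * K ∧ u * K < (k : ℝ) := by
  obtain ⟨k, hk1, hk2, hlo, hhi⟩ := h
  have hKR : (0 : ℝ) < K := by exact_mod_cast hK
  have h2 : k + 1 ≤ K := by omega
  refine ⟨k, by exact_mod_cast hk1, by exact_mod_cast h2, ?_, ?_⟩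
  · have := mul_lt_mul_of_pos_right hlo hKR
    rwa [sub_mul, div_mul_cancel₀ _ (ne_of_gt hKR)] at this
  · have := mul_lt_mul_of_pos_right hhi hKR
    rwa [div_mul_cancel₀ _ (ne_of_gt hKR)] at this

lemma good_of_mul {K : ℕ} (hK : 0 < K) {δ u : ℝ} (hu0 : 0 ≤ u) (hu1 : u ≤ 1)
    (h : ∀ k : ℕ, 1 ≤ (k : ℝ) → (k : ℝ) + 1 ≤ K → (k : ℝ) - δ * K < u * K →
      u * K < (k : ℝ) → False) :
    GoodPt K δ u := by
  refine ⟨hu0, hu1, fun hb => ?_⟩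
  obtain ⟨k, h1, h2, h3, h4⟩ := bad_bounds hK hb
  exact h k h1 h2 h3 h4

lemma good_pair {K : ℕ} (hK : 0 < K) {δ s : ℝ} (hδ0 : 0 < δ) (hδ1 : δ ≤ 1 / (3 * K))
    (hs0 : 0 ≤ s) (hs1 : s ≤ 1) :
    (GoodPt K δ (s + -δ) ∧ GoodPt K δ (s + 0)) ∨
    (GoodPt K δ (s + 0) ∧ GoodPt K δ (s + δ)) ∨
    (GoodPt K δ (s + -δ) ∧ GoodPt K δ (s + δ)) := by
  have hKR : (0 : ℝ) < K := by exact_mod_cast hK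
  have hKR1 : (1 : ℝ) ≤ K := by exact_mod_cast hK
  have hδK : δ * K ≤ 1 / 3 := by
    rw [le_div_iff₀ (by positivity)] at hδ1
    linarith
  have hδ3 : δ ≤ 1 / 3 := by nlinarith
  have hdKpos : 0 < δ * K := by positivity
  simp only [add_zero]
  by_cases h1 : 1 < s + δ
  · -- right edge : use s - δ and s
    have hsK : (1 - δ) * K < s * K := mul_lt_mul_of_pos_right (by linarith) hKR
    left
    constructor
    · refine good_of_mul hK (by linarith) (by linarith) (fun k hk1 hk2 h3 h4 => ?_)
      have e : (s + -δ) * K = s * K - δ * K := by ring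
      nlinarith
    · refine good_of_mul hK (by linarith) (by linarith) (fun k hk1 hk2 h3 h4 => ?_)
      nlinarith
  · by_cases h2 : s < δ
    · -- left edge : use s and s + δ
      have hsK : s * K < δ * K := mul_lt_mul_of_pos_right h2 hKR
      right; left
      constructor
      · refine good_of_mul hK (by linarith) (by linarith) (fun k hk1 hk2 h3 h4 => ?_)
        nlinarith
      · refine good_of_mul hK (by linarith) (by linarith) (fun k hk1 hk2 h3 h4 => ?_)
        have e : (s + δ) * K = s * K + δ * K := by ring
        nlinarith
    · -- middle : all three points are in [0,1]
      push_neg at h1 h2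
      by_cases hb : ∃ k : ℕ, 1 ≤ k ∧ k ≤ K - 1 ∧ (k : ℝ) / K - δ < s ∧ s < (k : ℝ) / K
      · -- s is bad: use s - δ and s + δ
        obtain ⟨k, hk1, hk2, h3, h4⟩ := bad_bounds hK hb
        right; right
        constructor
        · refine good_of_mul hK (by linarith) (by linarith) (fun m hm1 hm2 g3 g4 => ?_)
          have e : (s + -δ) * K = s * K - δ * K := by ring
          rw [e] at g3 g4
          have hmk : (m : ℝ) < k := by linarith
          have hmk' : (m : ℝ) + 1 ≤ k := by exact_mod_cast (by exact_mod_cast hmk : (m : ℕ) < k)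
          linarith
        · refine good_of_mul hK (by linarith) (by linarith) (fun m hm1 hm2 g3 g4 => ?_)
          have e : (s + δ) * K = s * K + δ * K := by ring
          rw [e] at g3 g4
          have hmk : (k : ℝ) < m := by linarith
          have hmk' : (k : ℝ) + 1 ≤ m := by exact_mod_cast (by exact_mod_cast hmk : (k : ℕ) < m)
          linarith
      · by_cases hc : ∃ k : ℕ, 1 ≤ k ∧ k ≤ K - 1 ∧ (k : ℝ) / K - δ < s - δ ∧ s - δ < (k : ℝ) / K
        · -- s - δ is bad: use s and s + δ
          obtain ⟨k, hk1, hk2, h3, h4⟩ := bad_bounds hK hc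
          have e : (s - δ) * K = s * K - δ * K := by ring
          rw [e] at h3 h4
          right; left
          refine ⟨⟨hs0, hs1, hb⟩, ?_⟩
          refine good_of_mul hK (by linarith) (by linarith) (fun m hm1 hm2 g3 g4 => ?_)
          have e2 : (s + δ) * K = s * K + δ * K := by ring
          rw [e2] at g3 g4
          have hmk : (k : ℝ) < m := by linarith
          have hmk' : (k : ℝ) + 1 ≤ m := by exact_mod_cast (by exact_mod_cast hmk : (k : ℕ) < m)
          linarith
        · -- both s - δ and s are good
          left
          have he : s + -δ = s - δ := by ring
          rw [he]
          exact ⟨⟨by linarith, by linarith, hc⟩, ⟨hs0, hs1, hb⟩⟩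

/-! ### The shifted-composition sequence -/

def shiftMap (d : ℕ) (e : Fin d) (t : ℝ) : (Fin d → ℝ) → (Fin d → ℝ) :=
  fun x j => x j + if j = e then t else 0

def PhiSeq (d : ℕ) (δ : ℝ) (φt : (Fin d → ℝ) → ℝ) : ℕ → (Fin d → ℝ) → ℝ
  | 0 => φt
  | (i + 1) =>
    if h : i < d then
      fun x => midf (PhiSeq d δ φt i (shiftMap d ⟨i, h⟩ (-δ) x))
        (PhiSeq d δ φt i x)
        (PhiSeq d δ φt i (shiftMap d ⟨i, h⟩ δ x))
    else PhiSeq d δ φt i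

/-- Theorem 2.1: a good approximation outside the trifling region can be upgraded
to a good uniform approximation on all of `[0,1]^d` by a slightly larger network. -/
theorem relu_approx_remove_trifling
    (d : ℕ) (hd : 0 < d) (ε : ℝ) (hε : 0 < ε)
    (N L K : ℕ) (hN : 0 < N) (hL : 0 < L) (hK : 0 < K)
    (δ : ℝ) (hδ0 : 0 < δ) (hδ1 : δ ≤ 1 / (3 * K))
    (f : (Fin d → ℝ) → ℝ) (hf : ContinuousOn f (unitCube d))
    (φt : (Fin d → ℝ) → ℝ) (hφt : ImplementedBy d (N : ℝ) (L : ℝ) φt)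
    (happrox : ∀ x ∈ unitCube d \ trifling d K δ, |φt x - f x| ≤ ε) :
    ∃ φ : (Fin d → ℝ) → ℝ,
      ImplementedBy d (3 ^ d * ((N : ℝ) + 4)) ((L : ℝ) + 2 * d) φ ∧
      ∀ x ∈ unitCube d, |φ x - f x| ≤ ε + d * modCont d f δ := by
  obtain ⟨L0, hL0, hnet0⟩ := hφt
  set ω := modCont d f δ with hωdef
  -- boundedness of f on the cube
  have hcomp : IsCompact (unitCube d) := isCompact_Icc
  obtain ⟨C, hC⟩ := hcomp.exists_bound_of_continuousOn hf
  set S := {t | ∃ x ∈ unitCube d, ∃ y ∈ unitCube d,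
        Real.sqrt (∑ i, (x i - y i) ^ 2) ≤ δ ∧ t = |f x - f y|} with hSdef
  have hbdd : BddAbove S := by
    refine ⟨2 * C, fun t ht => ?_⟩
    obtain ⟨x, hx, y, hy, -, rfl⟩ := ht
    have h1 : |f x - f y| ≤ |f x| + |f y| := by
      rw [sub_eq_add_neg]
      exact (abs_add_le _ _).trans (by rw [abs_neg])
    have h2 := hC x hx
    have h3 := hC y hy
    rw [Real.norm_eq_abs] at h2 h3
    linarith
  have hcube0 : (0 : Fin d → ℝ) ∈ unitCube d := by
    refine Set.mem_Icc.mpr ⟨le_refl _, fun i => ?_⟩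
    simp
  have hmem0 : (0 : ℝ) ∈ S := by
    refine ⟨0, hcube0, 0, hcube0, ?_, by simp⟩
    simp [Real.sqrt_eq_zero', le_of_lt hδ0]
  have hω0 : 0 ≤ ω := le_csSup hbdd hmem0
  have hωle : ∀ x ∈ unitCube d, ∀ y ∈ unitCube d,
      Real.sqrt (∑ i, (x i - y i) ^ 2) ≤ δ → |f x - f y| ≤ ω :=
    fun x hx y hy hdist => le_csSup hbdd ⟨x, hx, y, hy, hdist, rfl⟩
  -- network size claim
  have hnet : ∀ i : ℕ, i ≤ d →
      ReLUNetRec ((3 : ℝ) ^ i * ((N : ℝ) + 4)) (L0 + 2 * i) d (PhiSeq d δ φt i) := by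
    intro i
    induction i with
    | zero =>
      intro _
      have hle : (N : ℝ) ≤ (3 : ℝ) ^ 0 * ((N : ℝ) + 4) := by norm_num
      simpa [PhiSeq] using relu_mono hle hnet0
    | succ i ih =>
      intro hi
      have h : i < d := by omega
      have ihnet := ih (by omega)
      have hsh1 := isAffine_shift d ⟨i, h⟩ (-δ)
      have hsh2 := isAffine_id d
      have hsh3 := isAffine_shift d ⟨i, h⟩ δ
      have hmid := parmid (L0 + 2 * i) ihnet ihnet ihnet hsh1 hsh2 hsh3
      have h3i : (1 : ℝ) ≤ 3 ^ i := one_le_pow₀ (by norm_num)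
      have hN1 : (1 : ℝ) ≤ N := by exact_mod_cast hN
      have hWle : max (3 * ((3 : ℝ) ^ i * ((N : ℝ) + 4))) 6 ≤ (3 : ℝ) ^ (i + 1) * ((N : ℝ) + 4) := by
        have he : (3 : ℝ) ^ (i + 1) * ((N : ℝ) + 4) = 3 * ((3 : ℝ) ^ i * ((N : ℝ) + 4)) := by ring
        rw [he]
        refine max_le (le_refl _) ?_
        nlinarith
      have hdep : L0 + 2 * i + 2 = L0 + 2 * (i + 1) := by ring
      rw [← hdep]
      refine relu_mono hWle (relu_congr (fun x => ?_) hmid)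
      show midf _ _ _ = PhiSeq d δ φt (i + 1) x
      rw [PhiSeq, dif_pos h]
      rfl
  -- approximation claim
  have happ : ∀ i : ℕ, i ≤ d → ∀ x ∈ unitCube d,
      (∀ j : Fin d, i ≤ (j : ℕ) →
        ¬∃ k : ℕ, 1 ≤ k ∧ k ≤ K - 1 ∧ (k : ℝ) / K - δ < x j ∧ x j < (k : ℝ) / K) →
      |PhiSeq d δ φt i x - f x| ≤ ε + i * ω := by
    intro i
    induction i with
    | zero =>
      intro _ x hx hgood
      have hnt : x ∉ trifling d K δ := by
        rintro ⟨-, j, k, hk1, hk2, hlo, hhi⟩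
        exact hgood j (by omega) ⟨k, hk1, hk2, hlo, hhi⟩
      simpa [PhiSeq] using happrox x ⟨hx, hnt⟩
    | succ i ih =>
      intro hi x hx hgood
      have h : i < d := by omega
      set e : Fin d := ⟨i, h⟩ with hedef
      have hx' := Set.mem_Icc.mp hx
      have hs0 : 0 ≤ x e := hx'.1 e
      have hs1 : x e ≤ 1 := hx'.2 e
      -- key fact for a good shift
      have key : ∀ t : ℝ, |t| ≤ δ → GoodPt K δ (x e + t) →
          |PhiSeq d δ φt i (shiftMap d e t x) - f x| ≤ ε + (i + 1 : ℕ) * ω := by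
        intro t ht hgpt
        obtain ⟨hg0, hg1, hgneg⟩ := hgpt
        set y := shiftMap d e t x with hydef
        have hye : y e = x e + t := by simp [hydef, shiftMap]
        have hyne : ∀ j : Fin d, j ≠ e → y j = x j := by
          intro j hj
          simp [hydef, shiftMap, hj]
        have hycube : y ∈ unitCube d := by
          refine Set.mem_Icc.mpr ⟨fun j => ?_, fun j => ?_⟩
          · by_cases hj : j = e
            · subst hj; rw [hye] at *; simpa using hg0
            · rw [hyne j hj]; exact hx'.1 j
          · by_cases hj : j = e
            · subst hj; rw [hye] at *; simpa using hg1
            · rw [hyne j hj]; exact hx'.2 j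
        have hygood : ∀ j : Fin d, i ≤ (j : ℕ) →
            ¬∃ k : ℕ, 1 ≤ k ∧ k ≤ K - 1 ∧ (k : ℝ) / K - δ < y j ∧ y j < (k : ℝ) / K := by
          intro j hj
          by_cases hje : j = e
          · subst hje; rw [hye]; exact hgneg
          · have : (j : ℕ) ≠ i := by
              intro hc
              exact hje (Fin.ext hc)
            rw [hyne j hje]
            exact hgood j (by omega)
        have hIH := ih (by omega) y hycube hygood
        have hdist : Real.sqrt (∑ j, (y j - x j) ^ 2) ≤ δ := by
          have hsum : (∑ j, (y j - x j) ^ 2) = t ^ 2 := by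
            have : ∀ j : Fin d, (y j - x j) ^ 2 = if j = e then t ^ 2 else 0 := by
              intro j
              by_cases hj : j = e
              · subst hj; rw [hye]; simp
              · rw [hyne j hj]; simp [hj]
            rw [Finset.sum_congr rfl (fun j _ => this j)]
            simp
          rw [hsum, Real.sqrt_sq_eq_abs]
          exact ht
        have hfy := hωle y hycube x hx hdist
        have habs : |PhiSeq d δ φt i y - f x| ≤ (ε + i * ω) + ω := by
          have h1 : |PhiSeq d δ φt i y - f x|
              ≤ |PhiSeq d δ φt i y - f y| + |f y - f x| := abs_sub_le _ _ _
          linarith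
        have : ((i + 1 : ℕ) : ℝ) * ω = i * ω + ω := by push_cast; ring
        rw [this]
        linarith
      -- the middle point bound
      have hmid : (∀ k : ℕ, ¬(1 ≤ k ∧ k ≤ K - 1 ∧ (k : ℝ) / K - δ < x e ∧ x e < (k : ℝ) / K)) →
          |PhiSeq d δ φt i x - f x| ≤ ε + (i + 1 : ℕ) * ω := by
        intro hgneg
        have hxgood : ∀ j : Fin d, i ≤ (j : ℕ) →
            ¬∃ k : ℕ, 1 ≤ k ∧ k ≤ K - 1 ∧ (k : ℝ) / K - δ < x j ∧ x j < (k : ℝ) / K := by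
          intro j hj
          by_cases hje : j = e
          · subst hje
            rintro ⟨k, hk⟩
            exact hgneg k hk
          · have : (j : ℕ) ≠ i := fun hc => hje (Fin.ext hc)
            exact hgood j (by omega)
        have hIH := ih (by omega) x hx hxgood
        have : ((i + 1 : ℕ) : ℝ) * ω = i * ω + ω := by push_cast; ring
        rw [this]
        linarith
      -- put things together
      rw [PhiSeq, dif_pos h]
      have hδabs : |(-δ)| ≤ δ := by rw [abs_neg, abs_of_pos hδ0]
      have hδabs' : |δ| ≤ δ := by rw [abs_of_pos hδ0]
      rcases good_pair hK hδ0 hδ1 hs0 hs1 with ⟨hg1, hg2⟩ | ⟨hg1, hg2⟩ | ⟨hg1, hg2⟩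
      · -- s - δ and s good
        rw [add_zero] at hg2
        refine midf_bound_ab (key (-δ) hδabs hg1) (hmid ?_)
        obtain ⟨-, -, hneg⟩ := hg2
        intro k hk
        exact hneg ⟨k, hk⟩
      · -- s and s + δ good
        rw [add_zero] at hg1
        refine midf_bound_bc (hmid ?_) (key δ hδabs' hg2)
        obtain ⟨-, -, hneg⟩ := hg1
        intro k hk
        exact hneg ⟨k, hk⟩
      · -- s - δ and s + δ good
        exact midf_bound_ac (key (-δ) hδabs hg1) (key δ hδabs' hg2)
  refine ⟨PhiSeq d δ φt d, ⟨L0 + 2 * d, ?_, hnet d (le_refl d)⟩, fun x hx => ?_⟩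
  · push_cast
    linarith
  · have := happ d (le_refl d) x hx (fun j hj => absurd hj (by omega))
    exact this
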